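/- arXiv:math/0507091 — 2 statements merged into one kernel-verified Lean document; each statement's English description precedes it below -/
import Mathlib

section
/- Let Φ be a cellular automaton, 𝔄 a Φ-invariant subshift (Φ(𝔄) = 𝔄), and suppose a ∈ 𝔄~ has an essential (𝔄,Φ)-interface, meaning there are two projective components of some Y_r(a) on which the transitive-component label κ takes different values. Then Φ(a) also has an essential interface with the same signature; in particular essential interfaces are persistent under Φ. -/
open Topology MeasureTheory

/-- The configuration space `A^(ℤ^D)`, modelled as functions `(Fin D → ℤ) → A`. -/
abbrev Config (A : Type*) (D : ℕ) := (Fin D → ℤ) → A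

/-- Sup-norm of a lattice point `z ∈ ℤ^D`. -/
def normZ {D : ℕ} (z : Fin D → ℤ) : ℕ :=
  Finset.univ.sup fun i => (z i).natAbs

/-- The shift action: `(shift v a) z = a (z + v)`. -/
def shift {A : Type*} {D : ℕ} (v : Fin D → ℤ) (a : Config A D) : Config A D :=
  fun z => a (z + v)

/-- A subshift: a closed, shift-invariant subset of `A^(ℤ^D)`. -/
def IsSubshift {A : Type*} {D : ℕ} [TopologicalSpace A] (S : Set (Config A D)) : Prop :=
  IsClosed S ∧ ∀ v : Fin D → ℤ, shift v '' S = S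

/-- A cellular automaton of radius `r`: shift-commuting and locally determined
with radius `r`. -/
def IsCA {A : Type*} {D : ℕ} (Φ : Config A D → Config A D) (r : ℕ) : Prop :=
  (∀ (v : Fin D → ℤ) (a : Config A D), Φ (shift v a) = shift v (Φ a)) ∧
  ∀ (a b : Config A D) (z : Fin D → ℤ),
    (∀ w, normZ w ≤ r → a (z + w) = b (z + w)) → Φ a z = Φ b z

/-- The defect field `F_a(z)`: the largest radius `r` such that `a` restricted to
the ball `B(z,r)` agrees with (a translate of) some element of `S`. -/
noncomputable def defectField {A : Type*} {D : ℕ} (S : Set (Config A D))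
    (a : Config A D) (z : Fin D → ℤ) : ℕ∞ :=
  ⨆ (r : ℕ) (_ : ∃ b ∈ S, ∀ w, normZ w ≤ r → b (z + w) = a (z + w)), (r : ℕ∞)

/-- `𝔄~` : configurations with unbounded defect field. -/
def tildeSet {A : Type*} {D : ℕ} (S : Set (Config A D)) : Set (Config A D) :=
  {a | (⨆ z, defectField S a z) = ⊤}

/-- `Y_r(a) = { z : F_a(z) ≥ r }`, the non-defective region of range `r`. -/
def Yset {A : Type*} {D : ℕ} (S : Set (Config A D)) (a : Config A D) (r : ℕ) :
    Set (Fin D → ℤ) :=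
  {z | (r : ℕ∞) ≤ defectField S a z}

/-- `y` and `z` are connected by a trail inside `Y` (adjacency = sup-distance 1). -/
def TrailConn {D : ℕ} (Y : Set (Fin D → ℤ)) (y z : Fin D → ℤ) : Prop :=
  y ∈ Y ∧ Relation.ReflTransGen (fun p q => q ∈ Y ∧ normZ (q - p) = 1) y z

/-- A defect of `a` is removable if it can be erased by modifying `a` only near
the defective region. -/
def Removable {A : Type*} {D : ℕ} (S : Set (Config A D)) (a : Config A D) : Prop :=
  ∃ r : ℕ, 0 < r ∧ ∃ a' ∈ S, ∀ z ∈ Yset S a r, a' z = a z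

/-- The trail-connected component of `y` in `Y_r(a)` is projective: it meets
`Y_R(a)` for every `R`. -/
def Projective {A : Type*} {D : ℕ} (S : Set (Config A D)) (a : Config A D)
    (r : ℕ) (y : Fin D → ℤ) : Prop :=
  y ∈ Yset S a r ∧
    ∀ R : ℕ, ∃ w, TrailConn (Yset S a r) y w ∧ (R : ℕ∞) ≤ defectField S a w

/-- `λ^z = λ₁^{z₁} ⋯ λ_D^{z_D}`. -/
noncomputable def prodPow {D : ℕ} (l : Fin D → ℂ) (v : Fin D → ℤ) : ℂ :=
  ∏ i, l i ^ (v i)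

/-- A continuous `(Φ,σ)`-eigenfunction on `S` with generalized eigenvalue `(l0; l)`. -/
def IsEigenFun {A : Type*} {D : ℕ} [TopologicalSpace A] (S : Set (Config A D))
    (Φ : Config A D → Config A D) (l0 : ℂ) (l : Fin D → ℂ)
    (f : Config A D → ℂ) : Prop :=
  ContinuousOn f S ∧ (∃ a ∈ S, f a ≠ 0) ∧
  (∀ a ∈ S, f (Φ a) = l0 * f a) ∧
  ∀ a ∈ S, ∀ v : Fin D → ℤ, f (shift v a) = prodPow l v * f a

/-- The set `Spec(𝔄,Φ,σ)` of generalized eigenvalues (in the torus `𝕋^{D+1}`). -/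
def Spec' {A : Type*} {D : ℕ} [TopologicalSpace A] (S : Set (Config A D))
    (Φ : Config A D → Config A D) : Set (ℂ × (Fin D → ℂ)) :=
  {p | ‖p.1‖ = 1 ∧ (∀ i, ‖p.2 i‖ = 1) ∧
       ∃ f, IsEigenFun S Φ p.1 p.2 f}

/-- A continuous `σ`-eigenfunction on `S`. -/
def IsShiftEigenFun {A : Type*} {D : ℕ} [TopologicalSpace A] (S : Set (Config A D))
    (l : Fin D → ℂ) (f : Config A D → ℂ) : Prop :=
  ContinuousOn f S ∧ (∃ a ∈ S, f a ≠ 0) ∧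
  ∀ a ∈ S, ∀ v : Fin D → ℤ, f (shift v a) = prodPow l v * f a

/-- The group `Spec(𝔄,σ)` of shift eigenvalues. -/
def SpecSigma {A : Type*} {D : ℕ} [TopologicalSpace A] (S : Set (Config A D)) :
    Set (Fin D → ℂ) :=
  {l | (∀ i, ‖l i‖ = 1) ∧ ∃ f, IsShiftEigenFun S l f}

/-- Displacement `γ_{x,z}(λ) = λ^{x−z} f_z(a) / f_x(a)` of a dislocation. -/
noncomputable def disp {A : Type*} {D : ℕ} (l : Fin D → ℂ) (f : Config A D → ℂ)
    (a : Config A D) (x z : Fin D → ℤ) : ℂ :=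
  prodPow l (x - z) * f (shift z a) / f (shift x a)

/-- `C` is comeager relative to the subspace `S`. -/
def ComeagerIn {A : Type*} {D : ℕ} [TopologicalSpace A] (S C : Set (Config A D)) : Prop :=
  {x : S | (x : Config A D) ∈ C} ∈ residual S

/-- An a.e.-continuous (Baire-generically continuous), bounded, a.e.-nonzero
eigenfunction with eigenvalue `(l0; l)`, all equations holding comeagerly. -/
def IsAEEigenFun {A : Type*} {D : ℕ} [TopologicalSpace A] (S : Set (Config A D))
    (Φ : Config A D → Config A D) (l0 : ℂ) (l : Fin D → ℂ)
    (f : Config A D → ℂ) : Prop :=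
  (∃ M : ℝ, ∀ a ∈ S, ‖f a‖ ≤ M) ∧
  ComeagerIn S {a | ContinuousWithinAt f S a} ∧
  (¬ ComeagerIn S {a | f a = 0}) ∧
  ComeagerIn S {a | f (Φ a) = l0 * f a} ∧
  ∀ v : Fin D → ℤ, ComeagerIn S {a | f (shift v a) = prodPow l v * f a}

/-- The set `Spec_ae(𝔄,Φ,σ)` of a.e.-eigenvalues. -/
def SpecAE {A : Type*} {D : ℕ} [TopologicalSpace A] (S : Set (Config A D))
    (Φ : Config A D → Config A D) : Set (ℂ × (Fin D → ℂ)) :=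
  {p | ‖p.1‖ = 1 ∧ (∀ i, ‖p.2 i‖ = 1) ∧
       ∃ f, IsAEEigenFun S Φ p.1 p.2 f}

lemma normZ_add_le {D : ℕ} (v w : Fin D → ℤ) : normZ (v + w) ≤ normZ v + normZ w := by
  refine Finset.sup_le fun i _ => ?_
  calc ((v + w) i).natAbs = (v i + w i).natAbs := rfl
    _ ≤ (v i).natAbs + (w i).natAbs := Int.natAbs_add_le _ _
    _ ≤ normZ v + normZ w :=
        add_le_add (Finset.le_sup (f := fun i => (v i).natAbs) (Finset.mem_univ i))
          (Finset.le_sup (f := fun i => (w i).natAbs) (Finset.mem_univ i))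

lemma le_defectField {A : Type*} {D : ℕ} (S : Set (Config A D)) (a : Config A D)
    (z : Fin D → ℤ) (n : ℕ)
    (h : ∃ b ∈ S, ∀ w, normZ w ≤ n → b (z + w) = a (z + w)) :
    (n : ℕ∞) ≤ defectField S a z :=
  le_iSup₂_of_le n h le_rfl

lemma defect_witness {A : Type*} {D : ℕ} {S : Set (Config A D)} {a : Config A D}
    {z : Fin D → ℤ} {n : ℕ} (hn : 0 < n) (h : (n : ℕ∞) ≤ defectField S a z) :
    ∃ b ∈ S, ∀ w, normZ w ≤ n → b (z + w) = a (z + w) := by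
  by_contra hc
  push_neg at hc
  have hle : defectField S a z ≤ ((n - 1 : ℕ) : ℕ∞) := by
    refine iSup₂_le fun m hm => ?_
    obtain ⟨b, hbS, hb⟩ := hm
    by_cases hmn : n ≤ m
    · obtain ⟨w, hw, hbw⟩ := hc b hbS
      exact absurd (hb w (hw.trans hmn)) hbw
    · exact_mod_cast Nat.le_sub_one_of_lt (lt_of_not_ge hmn)
  have := h.trans hle
  have : n ≤ n - 1 := by exact_mod_cast this
  omega

lemma defect_step {A : Type*} {D : ℕ} {Φ : Config A D → Config A D} {R₀ : ℕ}
    (hΦ : IsCA Φ R₀) {S : Set (Config A D)} (himg : Φ '' S = S)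
    {a : Config A D} {z : Fin D → ℤ} {n : ℕ}
    (h : ((n + R₀ : ℕ) : ℕ∞) ≤ defectField S a z) :
    (n : ℕ∞) ≤ defectField S (Φ a) z := by
  rcases Nat.eq_zero_or_pos n with rfl | hn
  · simp
  · obtain ⟨b, hbS, hb⟩ := defect_witness (by omega) h
    refine le_defectField _ _ _ _ ⟨Φ b, ?_, ?_⟩
    · rw [← himg]; exact ⟨b, hbS, rfl⟩
    · intro w hw
      refine hΦ.2 b a (z + w) fun w' hw' => ?_
      rw [add_assoc]
      exact hb _ ((normZ_add_le w w').trans (by omega))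

/-- essential interfaces persist under `Φ`, with the same
signature: the two projective components carrying distinct labels remain
projective for `Φ(a)`, with unchanged labels. -/
theorem essential_interface_persistent {A : Type*} {D K : ℕ} [Fintype A]
    [TopologicalSpace A] [DiscreteTopology A]
    (Φ : Config A D → Config A D) (R₀ : ℕ) (hΦ : IsCA Φ R₀)
    (S : Set (Config A D)) (hS : IsSubshift S) (himg : Φ '' S = S)
    (comp : Fin K → Set (Config A D))
    (hdisj : ∀ i j, i ≠ j → Disjoint (comp i) (comp j))
    (hcover : S = ⋃ i, comp i)
    (hinvt : ∀ i (v : Fin D → ℤ), shift v '' comp i = comp i)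
    (hcompΦ : ∀ i, Φ '' comp i = comp i)
    (r' : ℕ) (κ : Config A D → Fin K)
    (hκloc : ∀ a b : Config A D, (∀ w, normZ w ≤ r' → a w = b w) → κ a = κ b)
    (hκclass : ∀ a ∈ S, ∀ i, a ∈ comp i ↔ κ a = i)
    (r : ℕ) (hr : r' + 1 ≤ r)
    (a : Config A D) (ha : a ∈ tildeSet S)
    (y z : Fin D → ℤ)
    (hy : Projective S a (r + R₀) y) (hz : Projective S a (r + R₀) z)
    (hdiff : κ (shift y a) ≠ κ (shift z a)) :
    Φ a ∈ tildeSet S ∧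
    Projective S (Φ a) r y ∧ Projective S (Φ a) r z ∧
    κ (shift y (Φ a)) = κ (shift y a) ∧
    κ (shift z (Φ a)) = κ (shift z a) ∧
    κ (shift y (Φ a)) ≠ κ (shift z (Φ a)) := by
  have hsub : Yset S a (r + R₀) ⊆ Yset S (Φ a) r := fun p hp => defect_step hΦ himg hp
  -- label preservation on the non-defective region
  have hκ : ∀ p : Fin D → ℤ, p ∈ Yset S a (r + R₀) →
      κ (shift p (Φ a)) = κ (shift p a) := by
    intro p hp
    obtain ⟨b, hbS, hb⟩ := defect_witness (n := r + R₀) (by omega) hp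
    have h1 : κ (shift p a) = κ (shift p b) := by
      refine (hκloc _ _ fun w hw => ?_).symm
      show b (w + p) = a (w + p)
      rw [add_comm]
      exact hb w (by omega)
    have hsb : shift p b ∈ S := by
      rw [← hS.2 p]; exact ⟨b, hbS, rfl⟩
    have hci : shift p b ∈ comp (κ (shift p b)) := (hκclass _ hsb _).mpr rfl
    have hΦci : Φ (shift p b) ∈ comp (κ (shift p b)) := by
      rw [← hcompΦ (κ (shift p b))]; exact ⟨_, hci, rfl⟩
    have hΦS : Φ (shift p b) ∈ S := by
      rw [hcover]; exact Set.mem_iUnion.2 ⟨_, hΦci⟩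
    have h2 : κ (Φ (shift p b)) = κ (shift p b) := (hκclass _ hΦS _).mp hΦci
    have h3 : κ (shift p (Φ a)) = κ (shift p (Φ b)) := by
      refine hκloc _ _ fun w hw => ?_
      show Φ a (w + p) = Φ b (w + p)
      refine hΦ.2 a b (w + p) fun w' hw' => ?_
      have he : w + p + w' = p + (w + w') := by ring
      rw [he]
      exact (hb _ ((normZ_add_le w w').trans (by omega))).symm
    rw [h3, ← hΦ.1, h2, h1]
  -- unbounded defect field persists
  have htop : Φ a ∈ tildeSet S := by
    rw [tildeSet, Set.mem_setOf_eq, iSup_eq_top]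
    intro c hc
    lift c to ℕ using hc.ne
    have hlt : ((c + 1 + R₀ : ℕ) : ℕ∞) < ⊤ := ENat.coe_lt_top _
    rw [← ha] at hlt
    obtain ⟨p, hp⟩ := lt_iSup_iff.1 hlt
    refine ⟨p, lt_of_lt_of_le ?_ (defect_step hΦ himg hp.le)⟩
    exact_mod_cast Nat.lt_succ_self c
  -- projectivity persists
  have hproj : ∀ p, Projective S a (r + R₀) p → Projective S (Φ a) r p := by
    rintro p ⟨hp1, hp2⟩
    refine ⟨hsub hp1, fun R => ?_⟩
    obtain ⟨w, ⟨hw1, hw2⟩, hw3⟩ := hp2 (R + R₀)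
    exact ⟨w, ⟨hsub hw1,
      Relation.ReflTransGen.mono (fun x y hxy => ⟨hsub hxy.1, hxy.2⟩) _ _ hw2⟩,
      defect_step hΦ himg hw3⟩
  refine ⟨htop, hproj y hy, hproj z hz, hκ y hy.1, hκ z hz.1, ?_⟩
  rw [hκ y hy.1, hκ z hz.1]
  exact hdiff
end

section
/- If 𝔄 ⊆ A^(ℤ^D) is a subshift carrying a shift-ergodic Borel probability measure μ with full support, then 𝔄 is projectively transitive: for any spacious set Y ⊆ ℤ^D (one containing balls of every radius) and any nonempty open O ⊆ 𝔄, the set ⋃_{y∈Y} σ^{−y}(O) is dense in 𝔄. -/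
open Topology MeasureTheory

lemma shift_shift' {A : Type*} {D : ℕ} (v w : Fin D → ℤ) (a : Config A D) :
    shift v (shift w a) = shift (v + w) a := by
  funext z; simp [shift, add_assoc]

lemma shift_zero' {A : Type*} {D : ℕ} (a : Config A D) :
    shift (0 : Fin D → ℤ) a = a := by
  funext z; simp [shift]

lemma shift_preimage' {A : Type*} {D : ℕ} (v w : Fin D → ℤ) (P : Set (Config A D)) :
    shift w ⁻¹' (shift v ⁻¹' P) = shift (v + w) ⁻¹' P := by
  ext a; simp [Set.mem_preimage, shift_shift']

lemma normZ_neg' {D : ℕ} (z : Fin D → ℤ) : normZ (-z) = normZ z := by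
  simp [normZ]

lemma normZ_zero' {D : ℕ} : normZ (0 : Fin D → ℤ) = 0 := by
  simp [normZ]

/-- Auxiliary sequence: `(mySeq c k).1` is the `k`-th point, `(mySeq c k).2`
bounds the norms of all points up to index `k`. -/
def mySeq {D : ℕ} (c : ℕ → (Fin D → ℤ)) : ℕ → ((Fin D → ℤ) × ℕ)
  | 0 => (0, 0)
  | k+1 => (c (mySeq c k).2, max (mySeq c k).2 (normZ (c (mySeq c k).2)))

lemma mySeq_norm_le {D : ℕ} (c : ℕ → (Fin D → ℤ)) (k : ℕ) :
    normZ (mySeq c k).1 ≤ (mySeq c k).2 := by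
  cases k with
  | zero => simp [mySeq, normZ_zero']
  | succ k => simp [mySeq]

lemma mySeq_mono {D : ℕ} (c : ℕ → (Fin D → ℤ)) :
    Monotone fun k => (mySeq c k).2 :=
  monotone_nat_of_le_succ fun k => by simp [mySeq]

lemma mySeq_le {D : ℕ} (c : ℕ → (Fin D → ℤ)) {i k : ℕ} (h : i ≤ k) :
    normZ (mySeq c i).1 ≤ (mySeq c k).2 :=
  (mySeq_norm_le c i).trans (mySeq_mono c h)

/-- a subshift carrying a fully supported shift-ergodic
probability measure is projectively transitive. -/
theorem ergodic_full_support_projectively_transitive {A : Type*} {D : ℕ}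
    [Fintype A] [TopologicalSpace A] [DiscreteTopology A]
    [MeasurableSpace (Config A D)] [BorelSpace (Config A D)]
    (S : Set (Config A D)) (hS : IsSubshift S)
    (μ : Measure (Config A D)) [IsProbabilityMeasure μ]
    (hμS : μ S = 1)
    (hinv : ∀ v : Fin D → ℤ, MeasurePreserving (shift v) μ μ)
    (herg : ∀ T : Set (Config A D), MeasurableSet T →
      (∀ v : Fin D → ℤ, shift v ⁻¹' T = T) → μ T = 0 ∨ μ T = 1)
    (hfull : ∀ U : Set (Config A D), IsOpen U → (U ∩ S).Nonempty →
      0 < μ (U ∩ S))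
    (Y : Set (Fin D → ℤ))
    (hY : ∀ r : ℕ, ∃ y : Fin D → ℤ, ∀ w, normZ w ≤ r → y + w ∈ Y)
    (O : Set (Config A D)) (hO : IsOpen O) (hOne : (O ∩ S).Nonempty) :
    S ⊆ closure (S ∩ ⋃ y ∈ Y, {a | shift y a ∈ O}) := by
  intro a ha
  rw [mem_closure_iff]
  intro U hU haU
  by_contra hcon
  rw [Set.not_nonempty_iff_eq_empty] at hcon
  have hshiftm : ∀ v : Fin D → ℤ, Measurable (shift (A := A) v) := fun v => (hinv v).measurable
  set Q : Set (Config A D) := O ∩ S with hQdef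
  set P : Set (Config A D) := U ∩ S with hPdef
  have hQm : MeasurableSet Q := hO.measurableSet.inter hS.1.measurableSet
  have hPm : MeasurableSet P := hU.measurableSet.inter hS.1.measurableSet
  have hQpos : 0 < μ Q := hfull O hO hOne
  have hPpos : 0 < μ P := hfull U hU ⟨a, haU, ha⟩
  -- Step 1: find `v₀` with `μ (P ∩ shift v₀ ⁻¹' Q) ≠ 0` using ergodicity.
  set T : Set (Config A D) := ⋃ v : Fin D → ℤ, shift v ⁻¹' Q with hTdef
  have hTm : MeasurableSet T := MeasurableSet.iUnion fun v => (hshiftm v) hQm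
  have hTinv : ∀ v : Fin D → ℤ, shift v ⁻¹' T = T := by
    intro w
    ext b
    simp only [hTdef, Set.mem_iUnion, Set.mem_preimage]
    constructor
    · rintro ⟨v, hv⟩
      exact ⟨v + w, by rwa [← shift_shift']⟩
    · rintro ⟨v, hv⟩
      refine ⟨v - w, ?_⟩
      rw [shift_shift', sub_add_cancel]
      exact hv
  have hT1 : μ T = 1 := by
    rcases herg T hTm hTinv with h0 | h1
    · exfalso
      have hQT : Q ⊆ T := by
        intro b hb
        refine Set.mem_iUnion.mpr ⟨0, ?_⟩
        simpa [Set.mem_preimage, shift_zero'] using hb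
      exact absurd (measure_mono_null hQT h0) hQpos.ne'
    · exact h1
  have hPT : μ (P ∩ T) ≠ 0 := by
    intro h0
    have hTc : μ Tᶜ = 0 := by
      rw [measure_compl hTm (measure_ne_top μ T), hT1, measure_univ, tsub_self]
    have hsub : P ⊆ (P ∩ T) ∪ Tᶜ := by
      intro x hx
      by_cases hxT : x ∈ T
      · exact Or.inl ⟨hx, hxT⟩
      · exact Or.inr hxT
    have : μ P ≤ μ ((P ∩ T) ∪ Tᶜ) := measure_mono hsub
    have : μ P ≤ 0 := this.trans (by
      refine (measure_union_le _ _).trans ?_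
      rw [h0, hTc, add_zero])
    exact hPpos.ne' (le_antisymm this zero_le)
  have hv₀ : ∃ v₀ : Fin D → ℤ, μ (P ∩ shift v₀ ⁻¹' Q) ≠ 0 := by
    by_contra hall
    push_neg at hall
    apply hPT
    rw [hTdef, Set.inter_iUnion]
    exact measure_iUnion_null hall
  obtain ⟨v₀, hv₀⟩ := hv₀
  set P' : Set (Config A D) := P ∩ shift v₀ ⁻¹' Q with hP'def
  have hP'm : MeasurableSet P' := hPm.inter ((hshiftm v₀) hQm)
  have hε : 0 < μ P' := pos_iff_ne_zero.mpr hv₀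
  -- Any shift landing in `Y` (after offset `v₀`) kills the measure.
  have hkill : ∀ v : Fin D → ℤ, v₀ + v ∈ Y → μ (P' ∩ shift v ⁻¹' P') = 0 := by
    intro v hvY
    have hsub : P' ∩ shift v ⁻¹' P' ⊆ U ∩ (S ∩ ⋃ y ∈ Y, {a | shift y a ∈ O}) := by
      rintro b ⟨hb1, hb2⟩
      have hbU : b ∈ U := hb1.1.1
      have hbS : b ∈ S := hb1.1.2
      have hbQ : shift (v₀ + v) b ∈ Q := by
        have h2 : shift v₀ (shift v b) ∈ Q := hb2.2
        rwa [shift_shift'] at h2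
      exact ⟨hbU, hbS, Set.mem_biUnion hvY hbQ.1⟩
    rw [hcon] at hsub
    exact measure_mono_null hsub measure_empty
  -- Key translation identity for measures.
  have hkey : ∀ c c' : Fin D → ℤ,
      μ (shift c ⁻¹' P' ∩ shift c' ⁻¹' P') = μ (P' ∩ shift (c' - c) ⁻¹' P') := by
    intro c c'
    have h1 : shift c ⁻¹' (P' ∩ shift (c' - c) ⁻¹' P') = shift c ⁻¹' P' ∩ shift c' ⁻¹' P' := by
      rw [Set.preimage_inter, shift_preimage', sub_add_cancel]
    rw [← h1, (hinv c).measure_preimage (hP'm.inter ((hshiftm _) hP'm)).nullMeasurableSet]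
  -- Choose ball centers inside `Y - v₀`.
  choose yc hyc using hY
  set c : ℕ → (Fin D → ℤ) := fun r => yc r - v₀ with hcdef
  have hc : ∀ r u, normZ u ≤ r → v₀ + (c r + u) ∈ Y := by
    intro r u hu
    have h := hyc r u hu
    have : v₀ + (c r + u) = yc r + u := by simp only [hcdef]; abel
    rwa [this]
  set w : ℕ → (Fin D → ℤ) := fun k => (mySeq c k).1 with hwdef
  have hij : ∀ i j, i < j → v₀ + (w j - w i) ∈ Y := by
    intro i j hlt
    obtain ⟨k, rfl⟩ : ∃ k, j = k + 1 := ⟨j - 1, by omega⟩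
    have hle : normZ (-(w i)) ≤ (mySeq c k).2 := by
      rw [normZ_neg']
      exact mySeq_le c (by omega)
    have heq : w (k + 1) - w i = c ((mySeq c k).2) + (-(w i)) := by
      have h1 : w (k + 1) = c ((mySeq c k).2) := rfl
      rw [h1, sub_eq_add_neg]
    rw [heq]
    exact hc _ _ hle
  have hA : ∀ i j, i < j → μ (shift (w i) ⁻¹' P' ∩ shift (w j) ⁻¹' P') = 0 := by
    intro i j h
    rw [hkey]
    exact hkill _ (hij i j h)
  have hAe : ∀ i, μ (shift (w i) ⁻¹' P') = μ P' := fun i =>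
    (hinv (w i)).measure_preimage hP'm.nullMeasurableSet
  -- The union of `n` a.e.-disjoint copies has measure `n * μ P'`.
  have hsum : ∀ n : ℕ, μ (⋃ i ∈ Finset.range n, shift (w i) ⁻¹' P') = n * μ P' := by
    intro n
    induction n with
    | zero => simp
    | succ n ih =>
      rw [Finset.range_add_one, Finset.set_biUnion_insert]
      have ht : NullMeasurableSet (⋃ i ∈ Finset.range n, shift (w i) ⁻¹' P') μ :=
        (MeasurableSet.biUnion (Finset.range n).countable_toSet
          fun i _ => (hshiftm _) hP'm).nullMeasurableSet
      have hd : μ (shift (w n) ⁻¹' P' ∩ ⋃ i ∈ Finset.range n, shift (w i) ⁻¹' P') = 0 := by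
        refine measure_mono_null (t := ⋃ i : ℕ, ⋃ _ : i < n,
            (shift (w i) ⁻¹' P' ∩ shift (w n) ⁻¹' P')) ?_
            (measure_iUnion_null fun i => measure_iUnion_null fun hi => hA i n hi)
        rintro x ⟨hx1, hx2⟩
        simp only [Set.mem_iUnion, Finset.mem_range] at hx2 ⊢
        obtain ⟨i, hi, hxi⟩ := hx2
        exact ⟨i, hi, hxi, hx1⟩
      rw [measure_union₀ ht hd, hAe, ih]
      push_cast
      ring
  -- Contradiction: `n * μ P' > 1` for large `n`.
  obtain ⟨n, hn⟩ := ENNReal.exists_inv_nat_lt hε.ne'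
  have hn0 : (n : ENNReal) ≠ 0 := by
    intro h
    rw [h, ENNReal.inv_zero] at hn
    exact not_top_lt hn
  have h1 : 1 < (n : ENNReal) * μ P' := by
    have h2 : (n : ENNReal) * (n : ENNReal)⁻¹ < (n : ENNReal) * μ P' :=
      (ENNReal.mul_lt_mul_iff_right hn0 (ENNReal.natCast_ne_top n)).mpr hn
    rwa [ENNReal.mul_inv_cancel hn0 (ENNReal.natCast_ne_top n)] at h2
  have h2 : μ (⋃ i ∈ Finset.range n, shift (w i) ⁻¹' P') ≤ 1 := prob_le_one
  rw [hsum n] at h2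
  exact absurd h2 (not_le.mpr h1)
end
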